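/- arXiv:2011.09077 — 3 statements merged into one kernel-verified Lean document; each statement's English description precedes it below -/
import Mathlib

section
/- Let Γ be a finite tree (a finite connected acyclic simple graph) with vertex set V of cardinality at least 2. Call a vertex a leaf if it has degree 1, and let t be the number of leaves. Let a : V → ℤ be arbitrary integer weights and n : V → ℤ be arbitrary positive integer weights on the leaves. Let D(Γ*) be the abelian group generated by elements e_v for v ∈ V, subject to the relations n_v·(a_v e_v + Σ_{w adjacent to v} e_w) = 0 for each leaf v, and a_v e_v + Σ_{w adjacent to v} e_w = 0 for each non-leaf v. Then D(Γ*) can be generated by at most t elements. -/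
/-- The orbifold discriminant group of a weighted graph: the abelian group generated by
`e_v (v ∈ V)` with relations `n_v • (a_v e_v + Σ_{w ∼ v} e_w) = 0` at each leaf `v` (degree-1
vertex) and `a_v e_v + Σ_{w ∼ v} e_w = 0` at each non-leaf `v`. -/
abbrev orbifoldDiscriminantGroup (V : Type*) [Fintype V] [DecidableEq V]
    (G : SimpleGraph V) [DecidableRel G.Adj] (a : V → ℤ) (n : V → ℤ) : Type _ :=
  (V →₀ ℤ) ⧸ AddSubgroup.closure (Set.range fun v : V =>
    (if G.degree v = 1 then n v else 1) •
      (Finsupp.single v (a v) + ∑ w ∈ G.neighborFinset v, Finsupp.single w 1))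

section Aux

variable {V : Type*} [DecidableEq V] {G : SimpleGraph V}

private lemma aux_isPath_concat {u v w : V} {p : G.Walk u v} (hp : p.IsPath)
    (hw : w ∉ p.support) (h : G.Adj v w) : (p.concat h).IsPath := by
  rw [SimpleGraph.Walk.isPath_def, SimpleGraph.Walk.support_concat]
  refine List.Nodup.append hp.support_nodup (List.nodup_singleton w) ?_
  intro x hx hx'
  simp only [List.mem_singleton] at hx'
  subst hx'
  exact hw hx

private lemma aux_dist_split {r u x : V} (p : G.Walk r u) (hx : x ∈ p.support) :
    G.dist r x + G.dist x u ≤ p.length := by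
  have hspec := p.take_spec hx
  have hlen : (p.takeUntil x hx).length + (p.dropUntil x hx).length = p.length := by
    rw [← SimpleGraph.Walk.length_append, hspec]
  calc G.dist r x + G.dist x u ≤ (p.takeUntil x hx).length + (p.dropUntil x hx).length :=
        Nat.add_le_add (SimpleGraph.dist_le _) (SimpleGraph.dist_le _)
    _ = p.length := hlen

/-- In a tree, adjacent vertices have different distances from a fixed root. -/
private lemma aux_adj_dist_ne (hconn : G.Connected) (hacyc : G.IsAcyclic) (r : V) {u v : V}
    (h : G.Adj u v) : G.dist r u ≠ G.dist r v := by
  intro heq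
  obtain ⟨p, hp⟩ := hconn.exists_walk_length_eq_dist r u
  obtain ⟨q, hq⟩ := hconn.exists_walk_length_eq_dist r v
  have hppath : p.IsPath := p.isPath_of_length_eq_dist hp
  have hqpath : q.IsPath := q.isPath_of_length_eq_dist hq
  have hvns : v ∉ p.support := by
    intro hmem
    have hsplit := aux_dist_split p hmem
    rw [hp, ← heq] at hsplit
    have hz : G.dist v u = 0 := by omega
    have : v = u := (h.symm.reachable.dist_eq_zero_iff).mp hz
    exact G.loopless.irrefl u (this ▸ h)
  have hcpath : (p.concat h).IsPath := aux_isPath_concat hppath hvns h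
  have := hacyc.path_unique ⟨p.concat h, hcpath⟩ ⟨q, hqpath⟩
  have hlen : (p.concat h).length = q.length :=
    congrArg SimpleGraph.Walk.length (congrArg Subtype.val this)
  rw [SimpleGraph.Walk.length_concat, hp, hq, heq] at hlen
  omega

/-- In a tree, the neighbor strictly closer to the root is unique. -/
private lemma aux_parent_unique (hconn : G.Connected) (hacyc : G.IsAcyclic) (r : V)
    {v u₁ u₂ : V} (h₁ : G.Adj u₁ v) (h₂ : G.Adj u₂ v)
    (hd₁ : G.dist r u₁ + 1 = G.dist r v) (hd₂ : G.dist r u₂ + 1 = G.dist r v) : u₁ = u₂ := by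
  obtain ⟨p₁, hp₁⟩ := hconn.exists_walk_length_eq_dist r u₁
  obtain ⟨p₂, hp₂⟩ := hconn.exists_walk_length_eq_dist r u₂
  have hppath₁ : p₁.IsPath := p₁.isPath_of_length_eq_dist hp₁
  have hppath₂ : p₂.IsPath := p₂.isPath_of_length_eq_dist hp₂
  have hv₁ : v ∉ p₁.support := by
    intro hmem
    have hle : G.dist r v ≤ p₁.length := by
      have := aux_dist_split p₁ hmem; omega
    omega
  have hv₂ : v ∉ p₂.support := by
    intro hmem
    have hle : G.dist r v ≤ p₂.length := by
      have := aux_dist_split p₂ hmem; omega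
    omega
  have hc₁ : (p₁.concat h₁).IsPath := aux_isPath_concat hppath₁ hv₁ h₁
  have hc₂ : (p₂.concat h₂).IsPath := aux_isPath_concat hppath₂ hv₂ h₂
  have heqp := hacyc.path_unique ⟨p₁.concat h₁, hc₁⟩ ⟨p₂.concat h₂, hc₂⟩
  have : p₁.concat h₁ = p₂.concat h₂ := congrArg Subtype.val heqp
  obtain ⟨hv, -⟩ := SimpleGraph.Walk.concat_inj this
  exact hv

private lemma aux_adj_dist_le (hconn : G.Connected) (r : V) {u v : V} (h : G.Adj u v) :
    G.dist r v ≤ G.dist r u + 1 := by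
  have := hconn.dist_triangle (u := r) (v := u) (w := v)
  rwa [SimpleGraph.dist_eq_one_iff_adj.mpr h] at this

/-- Every vertex other than the root has a neighbor strictly closer to the root. -/
private lemma aux_exists_parent (hconn : G.Connected) (r : V) {v : V} (hv : v ≠ r) :
    ∃ u, G.Adj u v ∧ G.dist r u + 1 = G.dist r v := by
  have hd : G.dist r v ≠ 0 := fun h => hv ((hconn.dist_eq_zero_iff).mp h).symm
  obtain ⟨p, hp⟩ := hconn.exists_walk_length_eq_dist r v
  obtain ⟨w, hadj, q, hq⟩ := SimpleGraph.Walk.exists_eq_cons_of_ne hv p.reverse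
  have hqlen : q.length + 1 = G.dist r v := by
    have := congrArg SimpleGraph.Walk.length hq
    rw [SimpleGraph.Walk.length_reverse, SimpleGraph.Walk.length_cons] at this
    omega
  have hle : G.dist r w ≤ q.length := by
    have := SimpleGraph.dist_le q.reverse
    rwa [SimpleGraph.Walk.length_reverse] at this
  have hge : G.dist r v ≤ G.dist r w + 1 := aux_adj_dist_le hconn r hadj.symm
  exact ⟨w, hadj.symm, by omega⟩

end Aux

/-- Let `Γ` be a finite tree with at least two vertices, `a : V → ℤ` arbitrary
integer weights and `n` positive integer weights on the leaves.  Then the orbifold discriminant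
group `D(Γ*)` can be generated by at most `t` elements, where `t` is the number of leaves. -/
theorem orbifold_discriminant_group_generators
    (V : Type*) [Fintype V] [DecidableEq V] (G : SimpleGraph V) [DecidableRel G.Adj]
    (hconn : G.Connected) (hacyc : G.IsAcyclic) (hcard : 2 ≤ Fintype.card V)
    (a : V → ℤ) (n : V → ℤ) (hn : ∀ v, G.degree v = 1 → 0 < n v) :
    ∃ s : Finset (orbifoldDiscriminantGroup V G a n),
      s.card ≤ (Finset.univ.filter fun v : V => G.degree v = 1).card ∧
      AddSubgroup.closure (s : Set (orbifoldDiscriminantGroup V G a n)) = ⊤ := by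
  classical
  have hne : Nonempty V := Fintype.card_pos_iff.mp (by omega)
  obtain ⟨r⟩ := hne
  -- every vertex has a neighbor
  have hdeg0 : ∀ w : V, G.degree w ≠ 0 := by
    intro w h0
    obtain ⟨v, hv⟩ := Fintype.exists_ne_of_one_lt_card (by omega) w
    obtain ⟨p⟩ := hconn w v
    obtain ⟨x, hadj, q, -⟩ := SimpleGraph.Walk.exists_eq_cons_of_ne (Ne.symm hv) p
    have : x ∈ G.neighborFinset w := (G.mem_neighborFinset w x).mpr hadj
    rw [← G.card_neighborFinset_eq_degree] at h0
    simp [Finset.card_eq_zero.mp h0] at this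
  -- every non-leaf vertex has a child (a neighbor strictly farther from the root)
  have hchild : ∀ w : V, ¬ G.degree w = 1 →
      ∃ u, G.Adj w u ∧ G.dist r u = G.dist r w + 1 := by
    intro w hw
    by_cases hwr : w = r
    · subst hwr
      have : (G.neighborFinset w).Nonempty := by
        rw [← Finset.card_pos, G.card_neighborFinset_eq_degree]
        exact Nat.pos_of_ne_zero (hdeg0 w)
      obtain ⟨u, hu⟩ := this
      have hadj : G.Adj w u := (G.mem_neighborFinset w u).mp hu
      refine ⟨u, hadj, ?_⟩
      rw [SimpleGraph.dist_self, SimpleGraph.dist_eq_one_iff_adj.mpr hadj]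
    · obtain ⟨p₀, hp₀adj, hp₀d⟩ := aux_exists_parent hconn r hwr
      have hdeg2 : 1 < (G.neighborFinset w).card := by
        rw [G.card_neighborFinset_eq_degree]
        have h0 := hdeg0 w
        omega
      have hp₀mem : p₀ ∈ G.neighborFinset w := (G.mem_neighborFinset w p₀).mpr hp₀adj.symm
      obtain ⟨u, hu, hune⟩ := Finset.exists_mem_ne hdeg2 p₀
      have hadj : G.Adj w u := (G.mem_neighborFinset w u).mp hu
      refine ⟨u, hadj, ?_⟩
      have h1 : G.dist r u ≤ G.dist r w + 1 := aux_adj_dist_le hconn r hadj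
      have h2 : G.dist r u ≠ G.dist r w := aux_adj_dist_ne hconn hacyc r hadj.symm
      have h3 : G.dist r w ≤ G.dist r u + 1 := aux_adj_dist_le hconn r hadj.symm
      rcases (by omega : G.dist r u + 1 = G.dist r w ∨
          G.dist r u = G.dist r w + 1) with h | h
      · exact absurd (aux_parent_unique hconn hacyc r hadj.symm hp₀adj h hp₀d) hune
      · exact h
  -- choose the child function
  have hchild' : ∀ w : V, ∃ u, ¬ G.degree w = 1 →
      G.Adj w u ∧ G.dist r u = G.dist r w + 1 := by
    intro w
    by_cases hw : G.degree w = 1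
    · exact ⟨w, fun h => absurd hw h⟩
    · obtain ⟨u, hu⟩ := hchild w hw
      exact ⟨u, fun _ => hu⟩
  choose f hf using hchild'
  set I : Finset V := Finset.univ.filter (fun w => ¬ G.degree w = 1) with hI
  set S : Finset V := Finset.univ \ I.image f with hS
  have hmemI : ∀ w ∈ I, ¬ G.degree w = 1 := by
    intro w hw; exact (Finset.mem_filter.mp hw).2
  -- f is injective on I
  have hinj : Set.InjOn f ↑I := by
    intro w₁ h₁ w₂ h₂ heq
    obtain ⟨ha₁, hd₁⟩ := hf w₁ (hmemI w₁ h₁)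
    obtain ⟨ha₂, hd₂⟩ := hf w₂ (hmemI w₂ h₂)
    rw [heq] at ha₁ hd₁
    exact aux_parent_unique hconn hacyc r ha₁ ha₂ (by omega) (by omega)
  have hScard : S.card = (Finset.univ.filter fun v : V => G.degree v = 1).card := by
    have h1 : S.card = Fintype.card V - (I.image f).card :=
      (Finset.card_sdiff_of_subset (Finset.subset_univ _)).trans (by rw [Finset.card_univ])
    have h2 : (I.image f).card = I.card := Finset.card_image_of_injOn hinj
    have h3 : (Finset.univ.filter fun v : V => G.degree v = 1).card + I.card = Fintype.card V := by
      rw [hI, ← Finset.card_univ]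
      exact Finset.card_filter_add_card_filter_not _
    omega
  -- the generating subgroup of the free group
  set Rel : Set (V →₀ ℤ) := Set.range (fun v : V =>
    (if G.degree v = 1 then n v else 1) •
      (Finsupp.single v (a v) + ∑ w ∈ G.neighborFinset v, Finsupp.single w 1)) with hRel
  set H : AddSubgroup (V →₀ ℤ) :=
    AddSubgroup.closure (Rel ∪ (fun v => Finsupp.single v (1 : ℤ)) '' ↑S) with hH
  -- key claim: every basis element lies in H
  have key : ∀ d : ℕ, ∀ v : V, G.dist r v = d → Finsupp.single v (1 : ℤ) ∈ H := by
    intro d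
    induction d using Nat.strong_induction_on with
    | _ d IH =>
      intro v hvd
      by_cases hvS : v ∈ S
      · exact AddSubgroup.subset_closure (Or.inr ⟨v, hvS, rfl⟩)
      · have hvim : v ∈ I.image f := by
          rw [hS] at hvS
          simp only [Finset.mem_sdiff, Finset.mem_univ, true_and, not_not] at hvS
          exact hvS
        obtain ⟨w, hwI, hfw⟩ := Finset.mem_image.mp hvim
        have hwdeg : ¬ G.degree w = 1 := hmemI w hwI
        obtain ⟨hadj, hdist⟩ := hf w hwdeg
        rw [hfw] at hadj hdist
        -- the relation at w
        have hrel : Finsupp.single w (a w) + ∑ u ∈ G.neighborFinset w, Finsupp.single u (1 : ℤ)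
            ∈ H := by
          refine AddSubgroup.subset_closure (Or.inl ⟨w, ?_⟩)
          simp only [if_neg hwdeg, one_smul]
        have hvN : v ∈ G.neighborFinset w := (G.mem_neighborFinset w v).mpr hadj
        have hwd : G.dist r w < d := by omega
        have hw1 : Finsupp.single w (1 : ℤ) ∈ H := IH _ hwd w rfl
        have hwa : Finsupp.single w (a w) ∈ H := by
          have := AddSubgroup.zsmul_mem H hw1 (a w)
          rwa [Finsupp.smul_single, smul_eq_mul, mul_one] at this
        have herase : ∀ u ∈ (G.neighborFinset w).erase v, Finsupp.single u (1 : ℤ) ∈ H := by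
          intro u hu
          obtain ⟨hune, huN⟩ := Finset.mem_erase.mp hu
          have huadj : G.Adj w u := (G.mem_neighborFinset w u).mp huN
          have hule : G.dist r u ≤ G.dist r w + 1 := aux_adj_dist_le hconn r huadj
          by_cases hud : G.dist r u = d
          · -- u is a child of w distinct from v; it is not in the image of f, so u ∈ S
            have huS : u ∈ S := by
              rw [hS]
              simp only [Finset.mem_sdiff, Finset.mem_univ, true_and]
              intro him
              obtain ⟨w', hw'I, hfw'⟩ := Finset.mem_image.mp him
              obtain ⟨hadj', hdist'⟩ := hf w' (hmemI w' hw'I)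
              rw [hfw'] at hadj' hdist'
              have : w' = w := aux_parent_unique hconn hacyc r hadj' huadj
                (by omega) (by omega)
              rw [this, hfw] at hfw'
              exact hune hfw'.symm
            exact AddSubgroup.subset_closure (Or.inr ⟨u, huS, rfl⟩)
          · have : G.dist r u < d := by omega
            exact IH _ this u rfl
        have hsum : ∑ u ∈ (G.neighborFinset w).erase v, Finsupp.single u (1 : ℤ) ∈ H :=
          AddSubgroup.sum_mem H herase
        have hexpr : Finsupp.single v (1 : ℤ) =
            (Finsupp.single w (a w) + ∑ u ∈ G.neighborFinset w, Finsupp.single u (1 : ℤ))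
              - Finsupp.single w (a w)
              - ∑ u ∈ (G.neighborFinset w).erase v, Finsupp.single u (1 : ℤ) := by
          rw [← Finset.add_sum_erase _ _ hvN]
          abel
        rw [hexpr]
        exact AddSubgroup.sub_mem H (AddSubgroup.sub_mem H hrel hwa) hsum
  -- hence H = ⊤
  have hHtop : H = ⊤ := by
    rw [AddSubgroup.eq_top_iff']
    intro x
    induction x using Finsupp.induction_linear with
    | zero => exact AddSubgroup.zero_mem H
    | add x y hx hy => exact AddSubgroup.add_mem H hx hy
    | single v b =>
      have h1 : Finsupp.single v (1 : ℤ) ∈ H := key _ v rfl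
      have := AddSubgroup.zsmul_mem H h1 b
      rwa [Finsupp.smul_single, smul_eq_mul, mul_one] at this
  -- push forward to the quotient
  set K : AddSubgroup (V →₀ ℤ) := AddSubgroup.closure Rel with hK
  set π : (V →₀ ℤ) →+ orbifoldDiscriminantGroup V G a n := QuotientAddGroup.mk' K with hπ
  have hπsurj : Function.Surjective π := QuotientAddGroup.mk'_surjective K
  refine ⟨S.image (fun v => π (Finsupp.single v (1 : ℤ))), ?_, ?_⟩
  · exact (Finset.card_image_le).trans (le_of_eq hScard)
  · have hmap : AddSubgroup.map π H = ⊤ := by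
      rw [hHtop]
      exact AddSubgroup.map_top_of_surjective π hπsurj
    rw [AddMonoidHom.map_closure, Set.image_union, AddSubgroup.closure_union] at hmap
    have hRel0 : AddSubgroup.closure (π '' Rel) = ⊥ := by
      rw [AddSubgroup.closure_eq_bot_iff]
      rintro x ⟨y, hy, rfl⟩
      have : y ∈ K := AddSubgroup.subset_closure hy
      simpa [hπ, QuotientAddGroup.mk'_apply, QuotientAddGroup.eq_zero_iff] using this
    rw [hRel0, bot_sup_eq] at hmap
    have hcoe : ((S.image (fun v => π (Finsupp.single v (1 : ℤ)))) :
        Set (orbifoldDiscriminantGroup V G a n)) =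
        π '' ((fun v => Finsupp.single v (1 : ℤ)) '' ↑S) := by
      rw [Finset.coe_image, Set.image_image]
    rw [hcoe, hmap]
end

section
/- Let r ≥ 3 be an integer, n₁, …, n_r positive integers, and a₁, …, a_{r−2} pairwise distinct complex numbers. Let I be the ideal of the polynomial ring ℂ[x₁, …, x_r] generated by the r−2 polynomials x_i^{n_i} + x_{r−1}^{n_{r−1}} + a_i·x_r^{n_r} for 1 ≤ i ≤ r−2, and let R = ℂ[x₁, …, x_r]/I. For each tuple ζ = (ζ₁, …, ζ_r) of complex numbers with ζ_i^{n_i} = 1 for all i, the ℂ-algebra automorphism of ℂ[x₁, …, x_r] sending x_i to ζ_i·x_i preserves I and hence induces a ℂ-algebra automorphism σ_ζ of R. Then the subalgebra of R consisting of elements fixed by σ_ζ for all such tuples ζ equals the ℂ-subalgebra of R generated by the images of x_{r−1}^{n_{r−1}} and x_r^{n_r} (equivalently, the image of the ℂ-algebra homomorphism ℂ[x,y] → R with x ↦ x_r^{n_r}, y ↦ x_{r−1}^{n_{r−1}}). -/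
open MvPolynomial Finset

/-- The ideal of `ℂ[x₁, …, x_r]` generated by the `r - 2` Brieskorn polynomials
`x_i^{n_i} + x_{r-1}^{n_{r-1}} + a_i x_r^{n_r}` (`1 ≤ i ≤ r-2`); variables are indexed by
`Fin r`, so `x_i` is `X ⟨i-1, _⟩`. -/
noncomputable def brieskornIdeal (r : ℕ) (hr : 3 ≤ r) (n : Fin r → ℕ) (a : Fin (r - 2) → ℂ) :
    Ideal (MvPolynomial (Fin r) ℂ) :=
  Ideal.span (Set.range fun i : Fin (r - 2) =>
    X (Fin.castLE (Nat.sub_le r 2) i) ^ n (Fin.castLE (Nat.sub_le r 2) i) +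
    X (⟨r - 2, by omega⟩ : Fin r) ^ n (⟨r - 2, by omega⟩ : Fin r) +
    C (a i) * X (⟨r - 1, by omega⟩ : Fin r) ^ n (⟨r - 1, by omega⟩ : Fin r))

/-- Geometric sum of powers of a primitive root of unity. -/
lemma brieskornAux_root_sum (m : ℕ) (hm : 0 < m) (d : ℕ) :
    ∑ j : Fin m, ((Complex.exp (2 * Real.pi * Complex.I / m)) ^ (j : ℕ)) ^ d =
      if m ∣ d then (m : ℂ) else 0 := by
  have hprim : IsPrimitiveRoot (Complex.exp (2 * Real.pi * Complex.I / m)) m :=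
    Complex.isPrimitiveRoot_exp m hm.ne'
  set ω := Complex.exp (2 * Real.pi * Complex.I / m)
  simp_rw [fun j : Fin m => pow_right_comm ω (j : ℕ) d]
  rw [Fin.sum_univ_eq_sum_range]
  by_cases h : m ∣ d
  · rw [if_pos h, (hprim.pow_eq_one_iff_dvd d).2 h]
    simp
  · rw [if_neg h]
    have hne : ω ^ d ≠ 1 := fun h1 => h ((hprim.pow_eq_one_iff_dvd d).1 h1)
    rw [geom_sum_eq hne, ← pow_mul, mul_comm d m, pow_mul, hprim.pow_eq_one]
    simp

/-- Scaling variables acts on a monomial by a scalar. -/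
lemma brieskornAux_aeval_monomial (r : ℕ) (ζ : Fin r → ℂ) (d : Fin r →₀ ℕ) (c : ℂ) :
    aeval (fun i => C (ζ i) * X i) (monomial d c) =
      (∏ i : Fin r, ζ i ^ d i) • monomial d c := by
  rw [aeval_monomial]
  simp_rw [mul_pow, ← C_pow]
  rw [Finsupp.prod, Finset.prod_mul_distrib, prod_X_pow_eq_monomial,
    ← map_prod (C : ℂ →+* MvPolynomial (Fin r) ℂ),
    ← Finset.prod_subset (Finset.subset_univ d.support)
      (fun i _ hi => by rw [Finsupp.notMem_support_iff.1 hi, pow_zero]),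
    algebraMap_eq, smul_eq_C_mul, C_mul_monomial, C_mul_monomial, C_mul_monomial]
  congr 1
  ring

lemma brieskornAux_monomial_prod (r : ℕ) (d : Fin r →₀ ℕ) :
    ∏ i : Fin r, (X i : MvPolynomial (Fin r) ℂ) ^ d i = monomial d 1 := by
  rw [← prod_X_pow_eq_monomial]
  exact (Finset.prod_subset (Finset.subset_univ d.support)
    (fun i _ hi => by rw [Finsupp.notMem_support_iff.1 hi, pow_zero])).symm

/-- Each `X i ^ n i` lands in the subalgebra generated by the last two such powers. -/
lemma brieskornAux_Xpow_mem (r : ℕ) (hr : 3 ≤ r) (n : Fin r → ℕ)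
    (a : Fin (r - 2) → ℂ) (i : Fin r) :
    Ideal.Quotient.mk (brieskornIdeal r hr n a) (X i ^ n i) ∈
      Algebra.adjoin ℂ
        ({Ideal.Quotient.mk (brieskornIdeal r hr n a)
            (X (⟨r - 2, by omega⟩ : Fin r) ^ n (⟨r - 2, by omega⟩ : Fin r)),
          Ideal.Quotient.mk (brieskornIdeal r hr n a)
            (X (⟨r - 1, by omega⟩ : Fin r) ^ n (⟨r - 1, by omega⟩ : Fin r))} :
          Set (MvPolynomial (Fin r) ℂ ⧸ brieskornIdeal r hr n a)) := by
  have hr2 : r - 2 < r := by omega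
  have hr1 : r - 1 < r := by omega
  set j2 : Fin r := ⟨r - 2, hr2⟩
  set j1 : Fin r := ⟨r - 1, hr1⟩
  set mk := Ideal.Quotient.mk (brieskornIdeal r hr n a) with hmk
  set A := Algebra.adjoin ℂ ({mk (X j2 ^ n j2), mk (X j1 ^ n j1)} :
    Set (MvPolynomial (Fin r) ℂ ⧸ brieskornIdeal r hr n a)) with hA
  show mk (X i ^ n i) ∈ A
  have h2 : mk (X j2 ^ n j2) ∈ A := Algebra.subset_adjoin (Set.mem_insert _ _)
  have h1 : mk (X j1 ^ n j1) ∈ A :=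
    Algebra.subset_adjoin (Set.mem_insert_of_mem _ rfl)
  by_cases hi : (i : ℕ) < r - 2
  · set i' : Fin (r - 2) := ⟨(i : ℕ), hi⟩
    have hg : (X i ^ n i + X j2 ^ n j2 + C (a i') * X j1 ^ n j1) ∈
        brieskornIdeal r hr n a := by
      rw [brieskornIdeal]
      exact Ideal.subset_span ⟨i', rfl⟩
    have hz : mk (X i ^ n i + X j2 ^ n j2 + C (a i') * X j1 ^ n j1) = 0 :=
      (Ideal.Quotient.eq_zero_iff_mem).2 hg
    rw [map_add, map_add, map_mul] at hz
    have hC : mk (C (a i')) =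
        algebraMap ℂ (MvPolynomial (Fin r) ℂ ⧸ brieskornIdeal r hr n a) (a i') := rfl
    rw [hC] at hz
    have hexpr : mk (X i ^ n i) =
        -mk (X j2 ^ n j2) - algebraMap ℂ _ (a i') * mk (X j1 ^ n j1) := by
      linear_combination hz
    rw [hexpr]
    exact sub_mem (neg_mem h2) (mul_mem (A.algebraMap_mem _) h1)
  · by_cases hi2 : (i : ℕ) = r - 2
    · have : i = j2 := Fin.ext hi2
      rw [this]; exact h2
    · have hlt := i.isLt
      have : i = j1 := Fin.ext (show (i : ℕ) = r - 1 by omega)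
      rw [this]; exact h1

/-- A monomial all of whose exponents are divisible by the corresponding `n i` lands in
the subalgebra generated by the last two powers. -/
lemma brieskornAux_monomial_mem (r : ℕ) (hr : 3 ≤ r) (n : Fin r → ℕ) (hn : ∀ i, 0 < n i)
    (a : Fin (r - 2) → ℂ) (d : Fin r →₀ ℕ) (hdvd : ∀ i, n i ∣ d i) (c : ℂ) :
    Ideal.Quotient.mk (brieskornIdeal r hr n a) (monomial d c) ∈
      Algebra.adjoin ℂ
        ({Ideal.Quotient.mk (brieskornIdeal r hr n a)
            (X (⟨r - 2, by omega⟩ : Fin r) ^ n (⟨r - 2, by omega⟩ : Fin r)),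
          Ideal.Quotient.mk (brieskornIdeal r hr n a)
            (X (⟨r - 1, by omega⟩ : Fin r) ^ n (⟨r - 1, by omega⟩ : Fin r))} :
          Set (MvPolynomial (Fin r) ℂ ⧸ brieskornIdeal r hr n a)) := by
  set mk := Ideal.Quotient.mk (brieskornIdeal r hr n a) with hmk
  have hmono : monomial d c =
      C c * ∏ i : Fin r, ((X i : MvPolynomial (Fin r) ℂ) ^ n i) ^ (d i / n i) := by
    have h : ∀ i : Fin r, ((X i : MvPolynomial (Fin r) ℂ) ^ n i) ^ (d i / n i) =
        X i ^ d i := fun i => by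
      rw [← pow_mul, Nat.mul_div_cancel' (hdvd i)]
    simp_rw [h]
    rw [brieskornAux_monomial_prod, C_mul_monomial, mul_one]
  rw [hmono, map_mul, map_prod]
  refine mul_mem ?_ (Subalgebra.prod_mem _ fun i _ => ?_)
  · have h : mk (C c) =
        algebraMap ℂ (MvPolynomial (Fin r) ℂ ⧸ brieskornIdeal r hr n a) c := rfl
    rw [h]
    exact Subalgebra.algebraMap_mem _ _
  · rw [map_pow]
    exact pow_mem (brieskornAux_Xpow_mem r hr n a i) _

/-- Let `r ≥ 3`, `n₁, …, n_r` positive integers, `a₁, …, a_{r-2}` pairwise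
distinct complex numbers, and `R = ℂ[x₁, …, x_r]/I` the Brieskorn complete intersection ring.
For each tuple `ζ` of roots of unity with `ζ_i^{n_i} = 1`, the automorphism `x_i ↦ ζ_i x_i`
induces an automorphism `σ_ζ` of `R`.  The subalgebra of elements fixed by all the `σ_ζ` equals
the `ℂ`-subalgebra generated by the images of `x_{r-1}^{n_{r-1}}` and `x_r^{n_r}`. -/
theorem brieskorn_invariant_subalgebra
    (r : ℕ) (hr : 3 ≤ r) (n : Fin r → ℕ) (hn : ∀ i, 0 < n i)
    (a : Fin (r - 2) → ℂ) (ha : Function.Injective a)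
    (σ : (Fin r → ℂ) →
      ((MvPolynomial (Fin r) ℂ ⧸ brieskornIdeal r hr n a) ≃ₐ[ℂ]
        (MvPolynomial (Fin r) ℂ ⧸ brieskornIdeal r hr n a)))
    (hσ : ∀ ζ : Fin r → ℂ, (∀ i, ζ i ^ n i = 1) → ∀ p : MvPolynomial (Fin r) ℂ,
      σ ζ (Ideal.Quotient.mk (brieskornIdeal r hr n a) p) =
        Ideal.Quotient.mk (brieskornIdeal r hr n a)
          (aeval (fun i => C (ζ i) * X i) p)) :
    {y : MvPolynomial (Fin r) ℂ ⧸ brieskornIdeal r hr n a |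
        ∀ ζ : Fin r → ℂ, (∀ i, ζ i ^ n i = 1) → σ ζ y = y} =
      ↑(Algebra.adjoin ℂ
        ({Ideal.Quotient.mk (brieskornIdeal r hr n a)
            (X (⟨r - 2, by omega⟩ : Fin r) ^ n (⟨r - 2, by omega⟩ : Fin r)),
          Ideal.Quotient.mk (brieskornIdeal r hr n a)
            (X (⟨r - 1, by omega⟩ : Fin r) ^ n (⟨r - 1, by omega⟩ : Fin r))} :
          Set (MvPolynomial (Fin r) ℂ ⧸ brieskornIdeal r hr n a))) := by
  classical
  ext y
  simp only [Set.mem_setOf_eq, SetLike.mem_coe]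
  constructor
  · -- fixed points lie in the adjoined subalgebra
    intro hy
    obtain ⟨p, rfl⟩ := Ideal.Quotient.mk_surjective y
    set N : ℂ := ∏ i : Fin r, (n i : ℂ) with hN
    have hN0 : N ≠ 0 :=
      Finset.prod_ne_zero_iff.2 fun i _ => Nat.cast_ne_zero.2 (hn i).ne'
    set ω : Fin r → ℂ := fun i => Complex.exp (2 * Real.pi * Complex.I / n i) with hω
    have hω1 : ∀ i, ω i ^ n i = 1 := fun i =>
      (Complex.isPrimitiveRoot_exp (n i) (hn i).ne').pow_eq_one
    set q : MvPolynomial (Fin r) ℂ :=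
      ∑ d ∈ p.support.filter fun d => ∀ i, n i ∣ d i, monomial d (coeff d p) with hq
    -- average over the group
    have hsum : ∑ k : (∀ i : Fin r, Fin (n i)),
        aeval (fun i => C (ω i ^ ((k i : ℕ))) * X i) p = N • q := by
      have step1 : ∀ k : (∀ i : Fin r, Fin (n i)),
          aeval (fun i => C (ω i ^ ((k i : ℕ))) * X i) p =
            ∑ d ∈ p.support, (∏ i, (ω i ^ ((k i : ℕ))) ^ d i) • monomial d (coeff d p) := by
        intro k
        conv_lhs => rw [p.as_sum]
        rw [map_sum]
        exact Finset.sum_congr rfl fun d _ => brieskornAux_aeval_monomial r _ d _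
      simp_rw [step1]
      rw [Finset.sum_comm]
      have inner : ∀ d : Fin r →₀ ℕ,
          (∑ k : (∀ i : Fin r, Fin (n i)), ∏ i, (ω i ^ ((k i : ℕ))) ^ d i) =
            if (∀ i, n i ∣ d i) then N else 0 := by
        intro d
        have hswap := Finset.prod_univ_sum (fun i : Fin r => (univ : Finset (Fin (n i))))
          (fun i j => (ω i ^ (j : ℕ)) ^ d i)
        rw [Fintype.piFinset_univ] at hswap
        rw [← hswap]
        have h1 : ∀ i : Fin r, (∑ j : Fin (n i), (ω i ^ (j : ℕ)) ^ d i) =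
            if n i ∣ d i then ((n i : ℂ)) else 0 := fun i =>
          brieskornAux_root_sum (n i) (hn i) (d i)
        simp_rw [h1]
        by_cases h : ∀ i, n i ∣ d i
        · rw [if_pos h, hN]
          exact Finset.prod_congr rfl fun i _ => if_pos (h i)
        · rw [if_neg h]
          obtain ⟨i, hi⟩ := not_forall.1 h
          exact Finset.prod_eq_zero (Finset.mem_univ i) (if_neg hi)
      calc ∑ d ∈ p.support, ∑ k : (∀ i : Fin r, Fin (n i)),
              (∏ i, (ω i ^ ((k i : ℕ))) ^ d i) • monomial d (coeff d p)
          = ∑ d ∈ p.support,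
              (if (∀ i, n i ∣ d i) then N else 0) • monomial d (coeff d p) := by
            refine Finset.sum_congr rfl fun d _ => ?_
            rw [← Finset.sum_smul, inner d]
        _ = ∑ d ∈ p.support.filter fun d => ∀ i, n i ∣ d i,
              N • monomial d (coeff d p) := by
            rw [Finset.sum_filter]
            refine Finset.sum_congr rfl fun d _ => ?_
            split_ifs <;> simp
        _ = N • q := by rw [hq, Finset.smul_sum]
    -- the element is fixed by each group element
    have hfix : ∀ k : (∀ i : Fin r, Fin (n i)),
        Ideal.Quotient.mk (brieskornIdeal r hr n a)
            (aeval (fun i => C (ω i ^ ((k i : ℕ))) * X i) p) =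
          Ideal.Quotient.mk (brieskornIdeal r hr n a) p := by
      intro k
      have hζ : ∀ i, (ω i ^ ((k i : ℕ))) ^ n i = 1 := fun i => by
        rw [pow_right_comm, hω1 i, one_pow]
      rw [← hσ _ hζ p, hy _ hζ]
    have hcard : (Fintype.card (∀ i : Fin r, Fin (n i)) : ℂ) = N := by
      rw [Fintype.card_pi, hN, Nat.cast_prod]
      exact Finset.prod_congr rfl fun i _ => by rw [Fintype.card_fin]
    have mk_smul : ∀ (c : ℂ) (x : MvPolynomial (Fin r) ℂ),
        Ideal.Quotient.mk (brieskornIdeal r hr n a) (c • x) =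
          c • Ideal.Quotient.mk (brieskornIdeal r hr n a) x := by
      intro c x
      rw [← Ideal.Quotient.mkₐ_eq_mk ℂ (brieskornIdeal r hr n a), map_smul]
    have key : N • Ideal.Quotient.mk (brieskornIdeal r hr n a) p =
        N • Ideal.Quotient.mk (brieskornIdeal r hr n a) q := by
      have h1 : ∑ k : (∀ i : Fin r, Fin (n i)),
          Ideal.Quotient.mk (brieskornIdeal r hr n a)
            (aeval (fun i => C (ω i ^ ((k i : ℕ))) * X i) p) =
          N • Ideal.Quotient.mk (brieskornIdeal r hr n a) q := by
        rw [← map_sum, hsum, mk_smul]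
      have h2 : ∑ k : (∀ i : Fin r, Fin (n i)),
          Ideal.Quotient.mk (brieskornIdeal r hr n a)
            (aeval (fun i => C (ω i ^ ((k i : ℕ))) * X i) p) =
          N • Ideal.Quotient.mk (brieskornIdeal r hr n a) p := by
        simp_rw [hfix]
        rw [Finset.sum_const, Finset.card_univ, ← hcard, Nat.cast_smul_eq_nsmul]
      rw [← h1, h2]
    have hpq : Ideal.Quotient.mk (brieskornIdeal r hr n a) p =
        Ideal.Quotient.mk (brieskornIdeal r hr n a) q := by
      have h := congrArg (fun z => N⁻¹ • z) key
      simpa [smul_smul, inv_mul_cancel₀ hN0] using h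
    rw [hpq, hq, map_sum]
    refine Subalgebra.sum_mem _ fun d hd => ?_
    exact brieskornAux_monomial_mem r hr n hn a d (Finset.mem_filter.1 hd).2 _
  · -- elements of the adjoined subalgebra are fixed
    intro hy ζ hζ
    have hgen : ∀ j : Fin r,
        σ ζ (Ideal.Quotient.mk (brieskornIdeal r hr n a) (X j ^ n j)) =
          Ideal.Quotient.mk (brieskornIdeal r hr n a) (X j ^ n j) := by
      intro j
      rw [hσ ζ hζ, map_pow, aeval_X, mul_pow, ← C_pow, hζ j, map_one, one_mul]
    have hle : Algebra.adjoin ℂ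
        ({Ideal.Quotient.mk (brieskornIdeal r hr n a)
            (X (⟨r - 2, by omega⟩ : Fin r) ^ n (⟨r - 2, by omega⟩ : Fin r)),
          Ideal.Quotient.mk (brieskornIdeal r hr n a)
            (X (⟨r - 1, by omega⟩ : Fin r) ^ n (⟨r - 1, by omega⟩ : Fin r))} :
          Set (MvPolynomial (Fin r) ℂ ⧸ brieskornIdeal r hr n a)) ≤
        AlgHom.equalizer ((σ ζ).toAlgHom) (AlgHom.id ℂ _) := by
      apply Algebra.adjoin_le
      rintro z (rfl | hz)
      · exact hgen _
      · rw [Set.mem_singleton_iff.1 hz]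
        exact hgen _
    exact hle hy
end

section
/- Let k ≥ 1 be an integer and ζ ∈ ℂ a primitive (2k+1)-st root of unity. Let S = ℂ[x,u,v]/(xv − u²). The ℂ-algebra automorphism of ℂ[x,u,v] sending x ↦ x, u ↦ ζ·u, v ↦ ζ²·v maps xv − u² to ζ²·(xv − u²), hence preserves the ideal (xv − u²) and induces a ℂ-algebra automorphism σ of S. Then the subalgebra of S consisting of elements fixed by σ equals the ℂ-subalgebra of S generated by the images of x, u·v^k and v^{2k+1}. -/
open MvPolynomial

/-- The coordinate ring `S = ℂ[x,u,v]/(xv - u²)` of the `A₁` singularity, with variables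
`x = X 0`, `u = X 1`, `v = X 2`. -/
noncomputable abbrev A1Ring : Type :=
  MvPolynomial (Fin 3) ℂ ⧸ Ideal.span ({X 0 * X 2 - X 1 ^ 2} : Set (MvPolynomial (Fin 3) ℂ))

namespace A1Aux

noncomputable abbrev mk : MvPolynomial (Fin 3) ℂ →+* A1Ring :=
  Ideal.Quotient.mk (Ideal.span ({X 0 * X 2 - X 1 ^ 2} : Set (MvPolynomial (Fin 3) ℂ)))

lemma mk_C_mul (z : ℂ) (q : MvPolynomial (Fin 3) ℂ) :
    mk (C z * q) = z • mk q := by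
  rw [← smul_eq_C_mul, ← Ideal.Quotient.mkₐ_eq_mk ℂ, map_smul]


lemma gen_mem (k : ℕ) :
    mk (X 0) ∈ Algebra.adjoin ℂ ({mk (X 0), mk (X 1 * X 2 ^ k), mk (X 2 ^ (2 * k + 1))} : Set A1Ring) ∧
    mk (X 1 * X 2 ^ k) ∈ Algebra.adjoin ℂ ({mk (X 0), mk (X 1 * X 2 ^ k), mk (X 2 ^ (2 * k + 1))} : Set A1Ring) ∧
    mk (X 2 ^ (2 * k + 1)) ∈ Algebra.adjoin ℂ ({mk (X 0), mk (X 1 * X 2 ^ k), mk (X 2 ^ (2 * k + 1))} : Set A1Ring) :=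
  ⟨Algebra.subset_adjoin (Set.mem_insert _ _),
   Algebra.subset_adjoin (Set.mem_insert_of_mem _ (Set.mem_insert _ _)),
   Algebra.subset_adjoin (Set.mem_insert_of_mem _ (Set.mem_insert_of_mem _ (Set.mem_singleton _)))⟩

lemma monomial_mem (k : ℕ) (a b c : ℕ) (h : (2 * k + 1) ∣ (b + 2 * c)) :
    mk (X 0 ^ a * X 1 ^ b * X 2 ^ c) ∈
      Algebra.adjoin ℂ ({mk (X 0), mk (X 1 * X 2 ^ k), mk (X 2 ^ (2 * k + 1))} : Set A1Ring) := by
  induction b using Nat.strong_induction_on generalizing a c with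
  | _ b ih =>
    match b with
    | 0 =>
      obtain ⟨t, ht⟩ := h
      have hpar : (2 * k + 1) * t % 2 = t % 2 := by
        rw [Nat.mul_mod]
        have h1 : (2 * k + 1) % 2 = 1 := by omega
        rw [h1, one_mul]; omega
      have ht2 : t % 2 = 0 := by omega
      obtain ⟨s, rfl⟩ : ∃ s, t = 2 * s := ⟨t / 2, by omega⟩
      have hlin : (2 * k + 1) * (2 * s) = 2 * ((2 * k + 1) * s) := by ring
      have hc : c = (2 * k + 1) * s := by omega
      have hp : (X 0 ^ a * X 1 ^ 0 * X 2 ^ c : MvPolynomial (Fin 3) ℂ)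
          = X 0 ^ a * (X 2 ^ (2 * k + 1)) ^ s := by
        rw [hc, ← pow_mul]; ring
      rw [hp, map_mul, map_pow, map_pow]
      exact mul_mem (pow_mem (gen_mem k).1 a) (pow_mem (gen_mem k).2.2 _)
    | 1 =>
      obtain ⟨t, ht⟩ := h
      have hpar : (2 * k + 1) * t % 2 = t % 2 := by
        rw [Nat.mul_mod]
        have h1 : (2 * k + 1) % 2 = 1 := by omega
        rw [h1, one_mul]; omega
      have ht2 : t % 2 = 1 := by omega
      obtain ⟨s, rfl⟩ : ∃ s, t = 2 * s + 1 := ⟨t / 2, by omega⟩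
      have hlin : (2 * k + 1) * (2 * s + 1) = 2 * ((2 * k + 1) * s) + 2 * k + 1 := by ring
      have hc : c = k + (2 * k + 1) * s := by omega
      have hp : (X 0 ^ a * X 1 ^ 1 * X 2 ^ c : MvPolynomial (Fin 3) ℂ)
          = X 0 ^ a * (X 1 * X 2 ^ k) * (X 2 ^ (2 * k + 1)) ^ s := by
        rw [hc, pow_add, ← pow_mul]; ring
      rw [hp, map_mul, map_mul, map_pow, map_pow]
      exact mul_mem (mul_mem (pow_mem (gen_mem k).1 a) (gen_mem k).2.1)
        (pow_mem (gen_mem k).2.2 _)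
    | (m + 2) =>
      have key : mk (X 0 ^ a * X 1 ^ (m + 2) * X 2 ^ c)
          = mk (X 0 ^ (a + 1) * X 1 ^ m * X 2 ^ (c + 1)) := by
        rw [Ideal.Quotient.eq, Ideal.mem_span_singleton]
        exact ⟨-(X 0 ^ a * X 1 ^ m * X 2 ^ c), by ring⟩
      rw [key]
      exact ih m (by omega) (a + 1) (c + 1) (by
        have h2 : m + 2 * (c + 1) = m + 2 + 2 * c := by ring
        rw [h2]; exact h)

end A1Aux

namespace A1Aux

lemma aeval_f_monomial (ζ : ℂ) (d : Fin 3 →₀ ℕ) (r : ℂ) :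
    aeval (fun i : Fin 3 =>
        if i = 0 then X 0 else if i = 1 then C ζ * X 1 else C (ζ ^ 2) * X 2) (monomial d r)
      = C (ζ ^ (d 1 + 2 * d 2)) * monomial d r := by
  have hm : (monomial d r : MvPolynomial (Fin 3) ℂ)
      = C r * (X 0 ^ d 0 * X 1 ^ d 1 * X 2 ^ d 2) := by
    rw [monomial_eq, Finsupp.prod_fintype _ _ (fun i => pow_zero _), Fin.prod_univ_three]
  rw [hm]
  have f0 : (fun i : Fin 3 =>
      if i = 0 then X 0 else if i = 1 then C ζ * X 1 else C (ζ ^ 2) * X 2) 0 = X 0 := rfl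
  have f1 : (fun i : Fin 3 =>
      if i = 0 then X 0 else if i = 1 then C ζ * X 1 else C (ζ ^ 2) * X 2) 1 = C ζ * X 1 := rfl
  have f2 : (fun i : Fin 3 =>
      if i = 0 then X 0 else if i = 1 then C ζ * X 1 else C (ζ ^ 2) * X 2) 2
      = C (ζ ^ 2) * X 2 := rfl
  simp only [map_mul, map_pow, aeval_X, aeval_C, algebraMap_eq]
  norm_num [Fin.ext_iff]
  ring

end A1Aux

namespace A1Aux

variable (k : ℕ) (ζ : ℂ) (σ : A1Ring ≃ₐ[ℂ] A1Ring)
variable (hσ : ∀ p : MvPolynomial (Fin 3) ℂ,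
      σ (Ideal.Quotient.mk _ p) =
        Ideal.Quotient.mk _
          (aeval (fun i : Fin 3 =>
            if i = 0 then X 0 else if i = 1 then C ζ * X 1 else C (ζ ^ 2) * X 2) p))

include hσ

lemma sigma_pow_monomial (d : Fin 3 →₀ ℕ) (r : ℂ) (j : ℕ) :
    (σ ^ j) (mk (monomial d r)) = (ζ ^ (d 1 + 2 * d 2)) ^ j • mk (monomial d r) := by
  induction j with
  | zero => simp
  | succ j ih =>
    have h1 : σ (mk (monomial d r)) = ζ ^ (d 1 + 2 * d 2) • mk (monomial d r) := by
      rw [hσ, aeval_f_monomial, mk_C_mul]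
    have hstep : (σ ^ (j + 1)) (mk (monomial d r)) = (σ ^ j) (σ (mk (monomial d r))) :=
      DFunLike.congr_fun (pow_succ σ j) (mk (monomial d r))
    rw [hstep, h1, map_smul, ih, smul_smul, ← pow_succ']

lemma sum_sigma_pow_mem (y : A1Ring) (hk : 1 ≤ k) (hζ : IsPrimitiveRoot ζ (2 * k + 1)) :
    (∑ j ∈ Finset.range (2 * k + 1), (σ ^ j) y) ∈
      Algebra.adjoin ℂ ({mk (X 0), mk (X 1 * X 2 ^ k), mk (X 2 ^ (2 * k + 1))} : Set A1Ring) := by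
  obtain ⟨p, rfl⟩ := Ideal.Quotient.mk_surjective y
  rw [← support_sum_monomial_coeff p]
  simp only [map_sum]
  rw [Finset.sum_comm]
  apply Subalgebra.sum_mem
  intro d _
  have : ∀ j, (σ ^ j) (mk (monomial d (coeff d p)))
      = (ζ ^ (d 1 + 2 * d 2)) ^ j • mk (monomial d (coeff d p)) :=
    fun j => sigma_pow_monomial ζ σ hσ d (coeff d p) j
  simp only [this]
  rw [← Finset.sum_smul]
  by_cases hd : (2 * k + 1) ∣ (d 1 + 2 * d 2)
  · have h1 : ζ ^ (d 1 + 2 * d 2) = 1 := (hζ.pow_eq_one_iff_dvd _).mpr hd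
    rw [h1]
    simp only [one_pow, Finset.sum_const, Finset.card_range, nsmul_eq_mul, mul_one]
    apply Subalgebra.smul_mem
    have hm : (monomial d (coeff d p) : MvPolynomial (Fin 3) ℂ)
        = C (coeff d p) * (X 0 ^ d 0 * X 1 ^ d 1 * X 2 ^ d 2) := by
      rw [monomial_eq, Finsupp.prod_fintype _ _ (fun i => pow_zero _), Fin.prod_univ_three]
    rw [hm, mk_C_mul]
    exact Subalgebra.smul_mem _ (monomial_mem k (d 0) (d 1) (d 2) hd) _
  · have h1 : ζ ^ (d 1 + 2 * d 2) ≠ 1 := fun h => hd ((hζ.pow_eq_one_iff_dvd _).mp h)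
    rw [geom_sum_eq h1]
    have h2 : (ζ ^ (d 1 + 2 * d 2)) ^ (2 * k + 1) = 1 := by
      rw [← pow_mul, mul_comm, pow_mul, hζ.pow_eq_one, one_pow]
    rw [h2, sub_self, zero_div, zero_smul]
    exact Subalgebra.zero_mem _

end A1Aux



open A1Aux in

/-- Let `k ≥ 1`, `ζ` a primitive `(2k+1)`-st root of unity, and
`S = ℂ[x,u,v]/(xv - u²)`.  The automorphism `x ↦ x, u ↦ ζu, v ↦ ζ²v` preserves the ideal
`(xv - u²)` and induces a `ℂ`-algebra automorphism `σ` of `S`; the subalgebra of elements of `S`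
fixed by `σ` equals the `ℂ`-subalgebra generated by the images of `x`, `u·v^k` and `v^{2k+1}`. -/
theorem cyclic_cover_invariants_odd
    (k : ℕ) (hk : 1 ≤ k) (ζ : ℂ) (hζ : IsPrimitiveRoot ζ (2 * k + 1))
    (σ : A1Ring ≃ₐ[ℂ] A1Ring)
    (hσ : ∀ p : MvPolynomial (Fin 3) ℂ,
      σ (Ideal.Quotient.mk _ p) =
        Ideal.Quotient.mk _
          (aeval (fun i : Fin 3 =>
            if i = 0 then X 0 else if i = 1 then C ζ * X 1 else C (ζ ^ 2) * X 2) p)) :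
    {y : A1Ring | σ y = y} =
      ↑(Algebra.adjoin ℂ
        ({Ideal.Quotient.mk _ (X 0),
          Ideal.Quotient.mk _ (X 1 * X 2 ^ k),
          Ideal.Quotient.mk _ (X 2 ^ (2 * k + 1))} : Set A1Ring)) := by
  have hone : ζ ^ (2 * k + 1) = 1 := hζ.pow_eq_one
  ext y
  simp only [Set.mem_setOf_eq, SetLike.mem_coe]
  constructor
  · intro hy
    have hj : ∀ j : ℕ, (σ ^ j) y = y := by
      intro j
      induction j with
      | zero => rfl
      | succ j ih =>
        have := DFunLike.congr_fun (pow_succ σ j) y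
        rw [this, AlgEquiv.mul_apply, hy, ih]
    have hsum : (∑ j ∈ Finset.range (2 * k + 1), (σ ^ j) y) = ((2 * k + 1 : ℕ) : ℂ) • y := by
      simp only [hj, Finset.sum_const, Finset.card_range]
      rw [Nat.cast_smul_eq_nsmul]
    have hmem := sum_sigma_pow_mem k ζ σ hσ y hk hζ
    rw [hsum] at hmem
    have hn : ((2 * k + 1 : ℕ) : ℂ) ≠ 0 := Nat.cast_ne_zero.mpr (by omega)
    have : y = (((2 * k + 1 : ℕ) : ℂ)⁻¹) • (((2 * k + 1 : ℕ) : ℂ) • y) := by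
      rw [smul_smul, inv_mul_cancel₀ hn, one_smul]
    rw [this]
    exact Subalgebra.smul_mem _ hmem _
  · intro hy
    have hle : Algebra.adjoin ℂ
        ({Ideal.Quotient.mk _ (X 0),
          Ideal.Quotient.mk _ (X 1 * X 2 ^ k),
          Ideal.Quotient.mk _ (X 2 ^ (2 * k + 1))} : Set A1Ring)
        ≤ AlgHom.equalizer (σ : A1Ring →ₐ[ℂ] A1Ring) (AlgHom.id ℂ A1Ring) := by
      apply Algebra.adjoin_le
      rintro x (rfl | rfl | rfl)
      · show σ (mk (X 0)) = mk (X 0)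
        rw [hσ]
        congr 1
        simp [aeval_X]
      · show σ (mk (X 1 * X 2 ^ k)) = mk (X 1 * X 2 ^ k)
        rw [hσ]
        congr 1
        have hC : (C ζ : MvPolynomial (Fin 3) ℂ) ^ (2 * k + 1) = 1 := by
          rw [← C_pow, hone, C_1]
        simp only [map_mul, map_pow, aeval_X]
        norm_num [Fin.ext_iff]
        rw [mul_pow]
        linear_combination (X 1 * X 2 ^ k : MvPolynomial (Fin 3) ℂ) * hC
      · show σ (mk (X 2 ^ (2 * k + 1))) = mk (X 2 ^ (2 * k + 1))
        rw [hσ]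
        congr 1
        have hz : (ζ ^ 2) ^ (2 * k + 1) = 1 := by
          rw [← pow_mul, mul_comm, pow_mul, hone, one_pow]
        have hC : (C ζ : MvPolynomial (Fin 3) ℂ) ^ (2 * (2 * k + 1)) = 1 := by
          rw [← C_pow, pow_mul, hz, C_1]
        simp only [map_pow, aeval_X]
        norm_num [Fin.ext_iff]
        linear_combination (X 2 ^ (2 * k + 1) : MvPolynomial (Fin 3) ℂ) * hC
    exact (AlgHom.mem_equalizer _ _ _).mp (hle hy)
end
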